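/- Let F_n be convex functions on ℝⁿ, uniformly Lipschitz, decreasing pointwise to a convex function F : ℝⁿ → ℝ. Let P be the closure of the range of ∂F. Then F_n* converges to F* locally uniformly on the interior of P. -/

import Mathlib

open scoped RealInnerProductSpace
open Filter

/-- The convex subgradient. -/
def subgrad {n : ℕ} (u : EuclideanSpace ℝ (Fin n) → ℝ) (x : EuclideanSpace ℝ (Fin n)) :
    Set (EuclideanSpace ℝ (Fin n)) :=
  {y | ∀ z, u x + ⟪y, z - x⟫ ≤ u z}

/-- Real-valued Legendre transform (meaningful where the supremum is finite). -/
noncomputable def legendreR {n : ℕ} (u : EuclideanSpace ℝ (Fin n) → ℝ)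
    (p : EuclideanSpace ℝ (Fin n)) : ℝ :=
  sSup (Set.range fun x => (⟪x, p⟫ : ℝ) - u x)

/-- For a convex set in a finite-dimensional space, the interior of the closure
is contained in the interior. -/
lemma convex_interior_closure_subset {E : Type*} [NormedAddCommGroup E] [NormedSpace ℝ E]
    [FiniteDimensional ℝ E] {s : Set E} (hs : Convex ℝ s) :
    interior (closure s) ⊆ interior s := by
  rcases (interior s).eq_empty_or_nonempty with h | ⟨y, hy⟩
  · have hspan : affineSpan ℝ (closure s) = affineSpan ℝ s := by
      apply le_antisymm
      · rw [affineSpan_le]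
        exact closure_minimal (subset_affineSpan _ _)
          (affineSpan ℝ s).closed_of_finiteDimensional
      · exact affineSpan_mono ℝ subset_closure
    intro x hx
    exfalso
    have h1 : (interior (closure s)).Nonempty := ⟨x, hx⟩
    rw [Convex.interior_nonempty_iff_affineSpan_eq_top hs.closure, hspan,
      ← Convex.interior_nonempty_iff_affineSpan_eq_top hs, h] at h1
    exact h1.ne_empty rfl
  · intro x hx
    have hcont : ContinuousAt (fun t : ℝ => x + t • (x - y)) 0 := by fun_prop
    have hmem : ∀ᶠ t : ℝ in nhds 0, x + t • (x - y) ∈ interior (closure s) := by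
      have := hcont.preimage_mem_nhds (isOpen_interior.mem_nhds
        (show (fun t : ℝ => x + t • (x - y)) 0 ∈ interior (closure s) by simpa using hx))
      exact this
    obtain ⟨δ, δpos, hδ⟩ := Metric.eventually_nhds_iff.mp hmem
    set t : ℝ := δ / 2 with ht
    have htpos : 0 < t := by positivity
    have hz : x + t • (x - y) ∈ closure s := by
      refine interior_subset (hδ ?_)
      rw [Real.dist_eq, sub_zero, abs_of_nonneg htpos.le, ht]
      linarith
    have hseg : x ∈ openSegment ℝ y (x + t • (x - y)) := by
      refine ⟨t / (1 + t), 1 / (1 + t), by positivity, by positivity, ?_, ?_⟩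
      · rw [← add_div, add_comm t 1]
        exact div_self (by positivity)
      · match_scalars <;> field_simp <;> ring
    exact hs.openSegment_interior_closure_subset_interior hy hz hseg

/-- `legendreR u` is convex on any convex set where the defining suprema are bounded above. -/
lemma legendreR_convexOn {n : ℕ} (u : EuclideanSpace ℝ (Fin n) → ℝ)
    {C : Set (EuclideanSpace ℝ (Fin n))} (hC : Convex ℝ C)
    (hbdd : ∀ p ∈ C, BddAbove (Set.range fun x => (⟪x, p⟫ : ℝ) - u x)) :
    ConvexOn ℝ C (legendreR u) := by
  refine ⟨hC, fun p hp q hq a b ha hb hab => ?_⟩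
  unfold legendreR
  apply csSup_le (Set.range_nonempty _)
  rintro _ ⟨x, rfl⟩
  have h1 : (⟪x, p⟫ : ℝ) - u x ≤ legendreR u p := le_csSup (hbdd p hp) ⟨x, rfl⟩
  have h2 : (⟪x, q⟫ : ℝ) - u x ≤ legendreR u q := le_csSup (hbdd q hq) ⟨x, rfl⟩
  have key : (⟪x, a • p + b • q⟫ : ℝ) - u x
      = a * ((⟪x, p⟫ : ℝ) - u x) + b * ((⟪x, q⟫ : ℝ) - u x) := by
    rw [inner_add_right, real_inner_smul_right, real_inner_smul_right]
    linear_combination (u x) * hab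
  have goal : (⟪x, a • p + b • q⟫ : ℝ) - u x ≤ a * legendreR u p + b * legendreR u q := by
    rw [key]
    exact add_le_add (mul_le_mul_of_nonneg_left h1 ha) (mul_le_mul_of_nonneg_left h2 hb)
  simpa [smul_eq_mul, legendreR] using goal

/-- If uniformly Lipschitz convex `F_n` decrease pointwise to convex `F`, then the Legendre
transforms `F_n*` converge to `F*` locally uniformly on the interior of the closure `P` of
the range of `∂F`. -/
theorem stmt14 {n : ℕ} (L : NNReal)
    (F : ℕ → EuclideanSpace ℝ (Fin n) → ℝ) (G : EuclideanSpace ℝ (Fin n) → ℝ)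
    (hFconv : ∀ k, ConvexOn ℝ Set.univ (F k)) (hGconv : ConvexOn ℝ Set.univ G)
    (hlip : ∀ k, LipschitzWith L (F k)) (hGlip : LipschitzWith L G)
    (hanti : ∀ x, Antitone fun k => F k x)
    (hlim : ∀ x, Tendsto (fun k => F k x) atTop (nhds (G x))) :
    TendstoLocallyUniformlyOn (fun k => legendreR (F k)) (legendreR G) atTop
      (interior (closure (⋃ x, subgrad G x))) := by
  classical
  -- G ≤ F k pointwise
  have hGF : ∀ k x, G x ≤ F k x := fun k x =>
    le_of_tendsto (hlim x) (eventually_atTop.2 ⟨k, fun j hj => hanti x hj⟩)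
  -- the set where the Legendre sup for G is finite
  set B : Set (EuclideanSpace ℝ (Fin n)) :=
    {p | BddAbove (Set.range fun x => (⟪x, p⟫ : ℝ) - G x)} with hBdef
  have hBconv : Convex ℝ B := by
    intro p hp q hq a b ha hb hab
    obtain ⟨Mp, hMp⟩ := hp
    obtain ⟨Mq, hMq⟩ := hq
    refine ⟨a * Mp + b * Mq, ?_⟩
    rintro _ ⟨x, rfl⟩
    have h1 : (⟪x, p⟫ : ℝ) - G x ≤ Mp := hMp ⟨x, rfl⟩
    have h2 : (⟪x, q⟫ : ℝ) - G x ≤ Mq := hMq ⟨x, rfl⟩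
    have key : (⟪x, a • p + b • q⟫ : ℝ) - G x
        = a * ((⟪x, p⟫ : ℝ) - G x) + b * ((⟪x, q⟫ : ℝ) - G x) := by
      rw [inner_add_right, real_inner_smul_right, real_inner_smul_right]
      linear_combination (G x) * hab
    show (⟪x, a • p + b • q⟫ : ℝ) - G x ≤ a * Mp + b * Mq
    rw [key]
    exact add_le_add (mul_le_mul_of_nonneg_left h1 ha) (mul_le_mul_of_nonneg_left h2 hb)
  -- the subgradient range is contained in B
  have hSB : (⋃ x, subgrad G x) ⊆ B := by
    rintro p hp
    obtain ⟨x, hx : p ∈ subgrad G x⟩ := Set.mem_iUnion.mp hp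
    refine ⟨(⟪x, p⟫ : ℝ) - G x, ?_⟩
    rintro _ ⟨z, rfl⟩
    have := hx z
    have hsymm : (⟪p, z - x⟫ : ℝ) = ⟪z, p⟫ - ⟪x, p⟫ := by
      rw [inner_sub_right, real_inner_comm p z, real_inner_comm p x]
    rw [hsymm] at this
    show (⟪z, p⟫ : ℝ) - G z ≤ (⟪x, p⟫ : ℝ) - G x
    linarith
  -- consequence: the domain of local uniform convergence is inside interior B
  have hUB : interior (closure (⋃ x, subgrad G x)) ⊆ interior B := fun p hp =>
    convex_interior_closure_subset hBconv (interior_mono (closure_mono hSB) hp)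
  -- boundedness for the F k's on B
  have hbddF : ∀ k, ∀ p ∈ B, BddAbove (Set.range fun x => (⟪x, p⟫ : ℝ) - F k x) := by
    intro k p hp
    obtain ⟨M, hM⟩ := hp
    refine ⟨M, ?_⟩
    rintro _ ⟨x, rfl⟩
    have h1 : (⟪x, p⟫ : ℝ) - G x ≤ M := hM ⟨x, rfl⟩
    have := hGF k x
    show (⟪x, p⟫ : ℝ) - F k x ≤ M
    linarith
  -- monotone in k, bounded by legendreR G
  have hmono : ∀ p ∈ B, Monotone fun k => legendreR (F k) p := by
    intro p hp k l hkl
    apply csSup_le (Set.range_nonempty _)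
    rintro _ ⟨x, rfl⟩
    show (⟪x, p⟫ : ℝ) - F k x ≤ legendreR (F l) p
    refine le_trans ?_ (le_csSup (hbddF l p hp) ⟨x, rfl⟩)
    have : F l x ≤ F k x := hanti x hkl
    show (⟪x, p⟫ : ℝ) - F k x ≤ (⟪x, p⟫ : ℝ) - F l x
    linarith
  have hleG : ∀ k, ∀ p ∈ B, legendreR (F k) p ≤ legendreR G p := by
    intro k p hp
    apply csSup_le (Set.range_nonempty _)
    rintro _ ⟨x, rfl⟩
    show (⟪x, p⟫ : ℝ) - F k x ≤ legendreR G p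
    refine le_trans ?_ (le_csSup hp ⟨x, rfl⟩)
    have := hGF k x
    show (⟪x, p⟫ : ℝ) - F k x ≤ (⟪x, p⟫ : ℝ) - G x
    linarith
  -- pointwise convergence on B
  have hpt : ∀ p ∈ B, Tendsto (fun k => legendreR (F k) p) atTop (nhds (legendreR G p)) := by
    intro p hp
    have hbd : BddAbove (Set.range fun k => legendreR (F k) p) :=
      ⟨legendreR G p, by rintro _ ⟨k, rfl⟩; exact hleG k p hp⟩
    have ht := tendsto_atTop_ciSup (hmono p hp) hbd
    have heq : (⨆ k, legendreR (F k) p) = legendreR G p := by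
      apply le_antisymm
      · exact ciSup_le fun k => hleG k p hp
      · apply csSup_le (Set.range_nonempty _)
        rintro _ ⟨x, rfl⟩
        have hx : Tendsto (fun k => (⟪x, p⟫ : ℝ) - F k x) atTop
            (nhds ((⟪x, p⟫ : ℝ) - G x)) := (tendsto_const_nhds.sub (hlim x))
        show (⟪x, p⟫ : ℝ) - G x ≤ ⨆ k, legendreR (F k) p
        refine le_of_tendsto hx (Eventually.of_forall fun k => ?_)
        exact le_trans (le_csSup (hbddF k p hp) ⟨x, rfl⟩) (le_ciSup hbd k)
    rwa [heq] at ht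
  -- continuity on interior B
  have hBint : Convex ℝ (interior B) := hBconv.interior
  have hsub : interior B ⊆ B := interior_subset
  have hcontF : ∀ k, ContinuousOn (legendreR (F k)) (interior B) := fun k =>
    (legendreR_convexOn (F k) hBint fun p hp => hbddF k p (hsub hp)).continuousOn
      isOpen_interior
  have hcontG : ContinuousOn (legendreR G) (interior B) :=
    (legendreR_convexOn G hBint fun p hp => hsub hp).continuousOn isOpen_interior
  -- Dini's argument on compact subsets
  rw [tendstoLocallyUniformlyOn_iff_forall_isCompact isOpen_interior]
  intro K hKU hK
  have hKB : K ⊆ interior B := hKU.trans hUB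
  rw [Metric.tendstoUniformlyOn_iff]
  intro ε hε
  set W : ℕ → Set (EuclideanSpace ℝ (Fin n)) :=
    fun k => interior B ∩ (fun p => legendreR G p - legendreR (F k) p) ⁻¹' Set.Iio ε with hW
  have hWopen : ∀ k, IsOpen (W k) :=
    fun k => (hcontG.sub (hcontF k)).isOpen_inter_preimage isOpen_interior isOpen_Iio
  have hWmono : Monotone W := by
    intro k l hkl p hp
    refine ⟨hp.1, ?_⟩
    have h1 : legendreR (F k) p ≤ legendreR (F l) p := hmono p (hsub hp.1) hkl
    have h2 : legendreR G p - legendreR (F k) p < ε := hp.2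
    simp only [Set.mem_preimage, Set.mem_Iio]
    linarith
  have hcover : K ⊆ ⋃ k, W k := by
    intro p hp
    have hpB := hsub (hKB hp)
    have := hpt p hpB
    have hev : ∀ᶠ k in atTop, legendreR G p - legendreR (F k) p < ε := by
      have := (this.const_sub (legendreR G p)).eventually (eventually_lt_nhds (by simpa using hε))
      simpa using this
    obtain ⟨k, hk⟩ := hev.exists
    exact Set.mem_iUnion.mpr ⟨k, hKB hp, hk⟩
  obtain ⟨t, hT⟩ := hK.elim_finite_subcover W hWopen hcover
  set N : ℕ := t.sup id with hN
  have hKN : K ⊆ W N := by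
    intro p hp
    obtain ⟨k, hkt, hpk⟩ := Set.mem_iUnion₂.mp (hT hp)
    exact hWmono (Finset.le_sup (f := id) hkt) hpk
  refine eventually_atTop.2 ⟨N, fun j hj p hp => ?_⟩
  have hpWj : p ∈ W j := hWmono hj (hKN hp)
  have h1 : legendreR (F j) p ≤ legendreR G p := hleG j p (hsub (hKB hp))
  have h2 : legendreR G p - legendreR (F j) p < ε := hpWj.2
  rw [Real.dist_eq, abs_of_nonneg (by linarith)]
  linarith
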